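/- Let G be a 2-connected planar simple graph with Δ(G) ≥ 5 that contains none of the configurations (A1)–(A4), and let H be a component of the graph obtained from G by deleting all vertices of degree 2. Then the minimum degree of H is at least 3. -/

import Mathlib

open SimpleGraph

/-- The degree of a vertex `v` of `G` (cardinality of its neighbor set). -/
noncomputable def deg {V : Type*} (G : SimpleGraph V) (v : V) : ℕ :=
  (G.neighborSet v).ncard

/-- The maximum degree `Δ(G)` of a finite graph `G`. -/
noncomputable def maxDeg {V : Type*} [Fintype V] (G : SimpleGraph V) : ℕ :=
  Finset.univ.sup fun v => deg G v

/-- The number of neighbors of `u` in `G` whose degree is exactly `k`. -/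
noncomputable def nDegEq {V : Type*} (G : SimpleGraph V) (u : V) (k : ℕ) : ℕ :=
  {w | w ∈ G.neighborSet u ∧ deg G w = k}.ncard

/-- The number of neighbors of `u` in `G` whose degree is at most `k`. -/
noncomputable def nDegLe {V : Type*} (G : SimpleGraph V) (u : V) (k : ℕ) : ℕ :=
  {w | w ∈ G.neighborSet u ∧ deg G w ≤ k}.ncard

/-- The number of neighbors of `u` in `G` whose degree is at least `k`. -/
noncomputable def nDegGe {V : Type*} (G : SimpleGraph V) (u : V) (k : ℕ) : ℕ :=
  {w | w ∈ G.neighborSet u ∧ k ≤ deg G w}.ncard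

/-- `H` is a minor of `G`: there is a family of pairwise disjoint connected branch sets
indexed by the vertices of `H`, with an edge of `G` between the branch sets of any two
adjacent vertices of `H`. -/
def IsMinorOf {W V : Type*} (H : SimpleGraph W) (G : SimpleGraph V) : Prop :=
  ∃ φ : W → Set V,
    (∀ w, (G.induce (φ w)).Connected) ∧
    (∀ w₁ w₂, w₁ ≠ w₂ → Disjoint (φ w₁) (φ w₂)) ∧
    ∀ ⦃w₁ w₂⦄, H.Adj w₁ w₂ → ∃ a ∈ φ w₁, ∃ b ∈ φ w₂, G.Adj a b

/-- A graph is planar iff it can be embedded in the plane; by Wagner's theorem this is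
equivalent to having neither a `K₅` nor a `K₃,₃` minor. -/
def IsPlanar {V : Type*} (G : SimpleGraph V) : Prop :=
  ¬ IsMinorOf (completeGraph (Fin 5)) G ∧
  ¬ IsMinorOf (completeBipartiteGraph (Fin 3) (Fin 3)) G

/-- A graph is 2-connected: it has at least 3 vertices and deleting any single vertex
leaves a connected graph. -/
def TwoConnected {V : Type*} [Fintype V] (G : SimpleGraph V) : Prop :=
  3 ≤ Fintype.card V ∧ ∀ v : V, (G.induce {w | w ≠ v}).Connected

/-- A proper edge coloring: distinct edges sharing a vertex get different colors. -/
def ProperEdgeColoring {V α : Type*} (G : SimpleGraph V) (c : Sym2 V → α) : Prop :=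
  ∀ e₁ ∈ G.edgeSet, ∀ e₂ ∈ G.edgeSet, e₁ ≠ e₂ → (∃ v, v ∈ e₁ ∧ v ∈ e₂) → c e₁ ≠ c e₂

/-- An acyclic edge coloring: a proper edge coloring with no bichromatic cycle. -/
def AcyclicEdgeColoring {V α : Type*} (G : SimpleGraph V) (c : Sym2 V → α) : Prop :=
  ProperEdgeColoring G c ∧
  ∀ (v : V) (w : G.Walk v v), w.IsCycle →
    ¬ ∃ i j : α, ∀ e ∈ w.edges, c e = i ∨ c e = j

/-- Configuration (A₁): a path `u v w` with `d(v) = 2` and `d(u) ≤ 9`. -/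
def ConfigA1 {V : Type*} (G : SimpleGraph V) : Prop :=
  ∃ u v w : V, G.Adj u v ∧ G.Adj v w ∧ u ≠ w ∧ deg G v = 2 ∧ deg G u ≤ 9

/-- Configuration (A₂). -/
def ConfigA2 {V : Type*} (G : SimpleGraph V) : Prop :=
  ∃ u : V, 1 ≤ nDegEq G u 2 ∧
    ((deg G u : ℤ) - 7 ≤ (nDegLe G u 8 : ℤ) ∨
     ((nDegLe G u 8 : ℤ) = (deg G u : ℤ) - 8 ∧ (deg G u : ℤ) - 9 ≤ (nDegEq G u 2 : ℤ)))

/-- Configuration (A₃). -/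
def ConfigA3 {V : Type*} (G : SimpleGraph V) : Prop :=
  ∃ u v : V, G.Adj u v ∧ deg G u = 3 ∧
    (deg G v ≤ 8 ∨
     (deg G v = 9 ∧ ∃ w, G.Adj u w ∧ G.Adj v w) ∨
     (deg G v = 10 ∧ 5 ≤ nDegLe G v 5 ∧
       ∃ w₁ w₂, w₁ ≠ w₂ ∧ G.Adj u w₁ ∧ G.Adj v w₁ ∧ G.Adj u w₂ ∧ G.Adj v w₂))

/-- Configuration (A₄). -/
def ConfigA4 {V : Type*} (G : SimpleGraph V) : Prop :=
  (∃ v u v₂ v₃ v₄ : V,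
     deg G v = 4 ∧
     G.Adj v u ∧ G.Adj v v₂ ∧ G.Adj v v₃ ∧ G.Adj v v₄ ∧
     ([u, v₂, v₃, v₄] : List V).Pairwise (· ≠ ·) ∧
     deg G u ≤ deg G v₂ ∧ deg G v₂ ≤ deg G v₃ ∧ deg G v₃ ≤ deg G v₄ ∧
     4 ≤ deg G u ∧ deg G u ≤ 7 ∧ deg G u + deg G v₂ ≤ 17) ∨
  (∃ v u v₂ v₃ v₄ v₅ : V,
     deg G v = 5 ∧
     G.Adj v u ∧ G.Adj v v₂ ∧ G.Adj v v₃ ∧ G.Adj v v₄ ∧ G.Adj v v₅ ∧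
     ([u, v₂, v₃, v₄, v₅] : List V).Pairwise (· ≠ ·) ∧
     deg G u ≤ deg G v₂ ∧ deg G v₂ ≤ deg G v₃ ∧ deg G v₃ ≤ deg G v₄ ∧
       deg G v₄ ≤ deg G v₅ ∧
     ((4 ≤ deg G u ∧ deg G u ≤ 6 ∧ deg G u + deg G v₂ + deg G v₃ ≤ 18) ∨
      (deg G u = 6 ∧ deg G v₂ = 6 ∧ deg G v₃ = 7 ∧ deg G v₄ = 7 ∧ deg G v₅ = 7 ∧
        G.Adj u v₅)))

lemma deg_induce {V : Type*} (G : SimpleGraph V) (S : Set V) (u : V) (hu : u ∈ S) :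
    deg (G.induce S) ⟨u, hu⟩ = ((G.neighborSet u) ∩ S).ncard := by
  unfold deg
  rw [← Set.ncard_image_of_injective _ (Subtype.val_injective (p := (· ∈ S)))]
  congr 1
  ext w
  constructor
  · rintro ⟨b, hb, rfl⟩
    exact ⟨hb, b.2⟩
  · rintro ⟨hw, hwS⟩
    exact ⟨⟨w, hwS⟩, by simpa using hw, rfl⟩

lemma min_deg_two {V : Type*} [Fintype V] (G : SimpleGraph V)
    (h2 : 3 ≤ Fintype.card V ∧ ∀ v : V, (G.induce {w | w ≠ v}).Connected) (u : V) :
    2 ≤ deg G u := by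
  classical
  by_contra hlt
  push_neg at hlt
  obtain ⟨x, hxu, hx⟩ : ∃ x : V, x ≠ u ∧ G.neighborSet u ⊆ {x} := by
    interval_cases h : deg G u
    · have he : G.neighborSet u = ∅ := by
        rw [← Set.ncard_eq_zero (Set.toFinite _)]; exact h
      obtain ⟨x, hx⟩ := Fintype.exists_ne_of_one_lt_card (by omega) u
      exact ⟨x, hx, by simp [he]⟩
    · obtain ⟨a, ha⟩ := (Set.ncard_eq_one).mp h
      have hau : G.Adj u a := by rw [← SimpleGraph.mem_neighborSet, ha]; rfl
      exact ⟨a, (G.ne_of_adj hau).symm, by simp [ha]⟩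
  obtain ⟨y, hyu, hyx⟩ : ∃ y : V, y ≠ u ∧ y ≠ x := by
    by_contra h
    push_neg at h
    have hsub : (Finset.univ : Finset V) ⊆ {u, x} := by
      intro y _
      rcases eq_or_ne y u with h1 | h1
      · simp [h1]
      · simp [h y h1]
    have hle := Finset.card_le_card hsub
    have hc : ({u, x} : Finset V).card ≤ 2 := (Finset.card_insert_le _ _).trans (by simp)
    have h3 := h2.1
    rw [Finset.card_univ] at hle
    omega
  have hconn := h2.2 x
  obtain ⟨p⟩ := hconn.preconnected ⟨u, hxu.symm⟩ ⟨y, hyx⟩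
  cases p with
  | nil =>
    exact hyu rfl
  | cons hadj q =>
    rename_i b
    have : G.Adj u ↑b := by simpa using hadj
    have hbx : (b : V) = x := hx this
    exact b.2 hbx

theorem claim_min_degree {V : Type*} [Fintype V] (G : SimpleGraph V)
    (h2 : TwoConnected G) (hplanar : IsPlanar G) (hΔ : 5 ≤ maxDeg G)
    (hA1 : ¬ ConfigA1 G) (hA2 : ¬ ConfigA2 G) (hA3 : ¬ ConfigA3 G) (hA4 : ¬ ConfigA4 G) :
    ∀ u : ↥{v : V | deg G v ≠ 2}, 3 ≤ deg (G.induce {v : V | deg G v ≠ 2}) u := by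
  classical
  rintro ⟨u, hu⟩
  have hu' : deg G u ≠ 2 := hu
  set S : Set V := {v : V | deg G v ≠ 2} with hS
  rw [deg_induce G S u hu]
  have hsplit := Set.ncard_inter_add_ncard_diff_eq_ncard (G.neighborSet u) S
    (Set.toFinite _)
  have hdiff : G.neighborSet u \ S = {w | w ∈ G.neighborSet u ∧ deg G w = 2} := by
    ext w
    simp [hS, Set.mem_diff, not_not, and_comm]
  rcases Set.eq_empty_or_nonempty (G.neighborSet u \ S) with hc | hc
  · -- no degree-2 neighbors
    rw [hc, Set.ncard_empty] at hsplit
    have hmin : 2 ≤ deg G u := min_deg_two G h2 u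
    have hmin2 : 2 ≤ (G.neighborSet u).ncard := hmin
    have hu2 : (G.neighborSet u).ncard ≠ 2 := hu'
    omega
  · -- u has a degree-2 neighbor
    obtain ⟨v, hv⟩ := hc
    rw [hdiff] at hv
    obtain ⟨hvN, hv2⟩ := hv
    have h1n2 : 1 ≤ nDegEq G u 2 := by
      have : 0 < ({w | w ∈ G.neighborSet u ∧ deg G w = 2} : Set V).ncard :=
        (Set.ncard_pos (Set.toFinite _)).mpr ⟨v, hvN, hv2⟩
      simpa [nDegEq, Nat.one_le_iff_ne_zero, Nat.pos_iff_ne_zero] using this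
    rw [ConfigA2] at hA2
    push_neg at hA2
    have hfirst := (hA2 u h1n2).1
    have hsub : nDegEq G u 2 ≤ nDegLe G u 8 := by
      apply Set.ncard_le_ncard _ (Set.toFinite _)
      rintro w ⟨hw1, hw2⟩
      exact ⟨hw1, by omega⟩
    have hdiffcard : (G.neighborSet u \ S).ncard = nDegEq G u 2 := by
      rw [hdiff]; rfl
    rw [hdiffcard] at hsplit
    have hfirst2 : ((nDegLe G u 8 : ℤ)) < ((G.neighborSet u).ncard : ℤ) - 7 := hfirst
    omega
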